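/- Main-factorization identity for the α-coefficients at λ = k − n/2 (used in the proof of Theorem 5.6/MainFactEven1): for every natural number n ≥ 2, all natural numbers N ≥ 1 and k with 1 ≤ k ≤ N, and every i with 0 ≤ i ≤ N: if i < k then α_i^{(N)}(k − n/2) = 0, and if i ≥ k then α_i^{(N)}(k − n/2) = α_{i−k}^{(N−k)}(−k − n/2). -/

import Mathlib

open Finset Polynomial

noncomputable def aC (n N j : ℕ) (l : ℂ) : ℂ :=
  (-2 : ℂ) ^ (N - j) *
    ((N.factorial : ℂ) / ((j.factorial : ℂ) * ((2 * N - 2 * j).factorial : ℂ))) *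
    ∏ k ∈ Finset.Ico j N, (2 * l - 4 * (N : ℂ) + 2 * (k : ℂ) + (n : ℂ) + 1)

noncomputable def bC (n N j : ℕ) (l : ℂ) : ℂ :=
  (-2 : ℂ) ^ (N - j) *
    ((N.factorial : ℂ) / ((j.factorial : ℂ) * ((2 * N - 2 * j + 1).factorial : ℂ))) *
    ∏ k ∈ Finset.Ico j N, (2 * l - 4 * (N : ℂ) + 2 * (k : ℂ) + (n : ℂ) - 1)

noncomputable def bCZ (n M : ℕ) (j : ℤ) (l : ℂ) : ℂ :=
  if 0 ≤ j ∧ j ≤ (M : ℤ) then bC n M j.toNat l else 0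

noncomputable def alphaC (n N i : ℕ) (l : ℂ) : ℂ :=
  (-1 : ℂ) ^ i * 2 ^ N * ((N.factorial : ℂ) / ((2 * N).factorial : ℂ)) * (N.choose i : ℂ) *
    (∏ k ∈ Finset.Icc (i + 1) N, (2 * l + (n : ℂ) - 2 * (k : ℂ))) *
    ∏ k ∈ Finset.Icc 1 i, (2 * l + (n : ℂ) - 2 * (k : ℂ) - 2 * (N : ℂ) + 1)

noncomputable def betaC (n N i : ℕ) (l : ℂ) : ℂ :=
  (-1 : ℂ) ^ i * 2 ^ N * ((N.factorial : ℂ) / ((2 * N + 1).factorial : ℂ)) * (N.choose i : ℂ) *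
    (∏ k ∈ Finset.Icc (i + 1) N, (2 * l + (n : ℂ) - 2 * (k : ℂ))) *
    ∏ k ∈ Finset.Icc 1 i, (2 * l + (n : ℂ) - 2 * (k : ℂ) - 2 * (N : ℂ) - 1)

noncomputable def gammaC (n N i : ℕ) (l p : ℂ) : ℂ :=
  (-1 : ℂ) ^ i * 2 ^ N *
    ((N.factorial : ℂ) / (((N : ℂ) + 1) * ((2 * N + 1).factorial : ℂ))) *
    ((N + 1).choose i : ℂ) *
    ((l + p - 2 * (N : ℂ) - 1) * ((N : ℂ) + 1) * (2 * l + (n : ℂ) - 2 * (i : ℂ)) +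
      (l + (n : ℂ) - p) * (2 * (N : ℂ) + 1) * ((N : ℂ) - (i : ℂ) + 1)) *
    (∏ k ∈ Finset.Icc (i + 1) N, (2 * l + (n : ℂ) - 2 * (k : ℂ))) *
    ∏ k ∈ Finset.Icc 1 (i - 1), (2 * l + (n : ℂ) - 2 * (k : ℂ) - 2 * (N : ℂ) - 1)

noncomputable def poch (a : ℂ) (l : ℕ) : ℂ :=
  ∏ m ∈ Finset.range l, (a + (m : ℂ))

def oddP (a j : ℕ) : ℕ := ∏ m ∈ Finset.range j, (2*a + 2*m + 1)

lemma oddP_succ (a j : ℕ) : oddP a (j+1) = oddP a j * (2*a + 2*j + 1) :=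
  Finset.prod_range_succ _ _

lemma oddP_shift (a m : ℕ) : oddP a (m+1) = (2*a+1) * oddP (a+1) m := by
  unfold oddP
  rw [Finset.prod_range_succ']
  rw [mul_comm]
  congr 1
  apply Finset.prod_congr rfl
  intro t _
  ring

lemma oddP_add (a s t : ℕ) : oddP a (s+t) = oddP a s * oddP (a+s) t := by
  induction t with
  | zero => simp [oddP]
  | succ t ih =>
      rw [show s + (t+1) = (s+t)+1 by omega, oddP_succ, ih, oddP_succ]
      ring_nf

lemma oddP_key : ∀ (m a : ℕ), oddP a m * 2^m * (2*a).factorial * (a+m).factorial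
    = (2*(a+m)).factorial * a.factorial
  | 0, a => by simp [oddP]
  | m+1, a => by
      have IH := oddP_key m (a+1)
      have e1 : (2*(a+1)).factorial = (2*a+2) * ((2*a+1) * (2*a).factorial) := by
        rw [show 2*(a+1) = (2*a+1)+1 by ring, Nat.factorial_succ, Nat.factorial_succ]
      rw [e1, Nat.factorial_succ] at IH
      apply Nat.eq_of_mul_eq_mul_left (show 0 < 2*a+2 by omega)
      rw [oddP_shift, show a + (m+1) = (a+1)+m by omega]
      zify at IH ⊢
      linear_combination (2:ℤ) * IH

lemma prod_odd (a : ℕ) : ∀ j : ℕ,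
    ∏ m ∈ Finset.Icc 1 j, (-(2*(a:ℂ)) - 2*(m:ℂ) + 1) = (-1)^j * (oddP a j : ℂ)
  | 0 => by simp [oddP]
  | j+1 => by
      rw [Finset.prod_Icc_succ_top (Nat.le_add_left 1 j), prod_odd a j, oddP_succ]
      push_cast
      ring

lemma prod_desc (k j : ℕ) (hkj : k ≤ j) : ∀ (M : ℕ), j ≤ M →
    ∏ m ∈ Finset.Icc (j+1) M, (2*(k:ℂ) - 2*(m:ℂ)) = (-2)^(M-j) * ((M-k).descFactorial (M-j) : ℂ) := by
  intro M hjM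
  induction M, hjM using Nat.le_induction with
  | base => simp
  | succ M hjM ih =>
      rw [Finset.prod_Icc_succ_top (by omega : j+1 ≤ M+1), ih,
        show M+1-k = (M-k)+1 by omega, show M+1-j = (M-j)+1 by omega,
        Nat.succ_descFactorial_succ]
      push_cast [Nat.cast_sub (show k ≤ M by omega)]
      ring

lemma prod_desc_neg (k j : ℕ) : ∀ (M : ℕ), j ≤ M →
    ∏ m ∈ Finset.Icc (j+1) M, (-(2*(k:ℂ)) - 2*(m:ℂ)) = (-2)^(M-j) * ((M+k).descFactorial (M-j) : ℂ) := by
  intro M hjM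
  induction M, hjM using Nat.le_induction with
  | base => simp
  | succ M hjM ih =>
      rw [Finset.prod_Icc_succ_top (by omega : j+1 ≤ M+1), ih,
        show M+1+k = (M+k)+1 by omega, show M+1-j = (M-j)+1 by omega,
        Nat.succ_descFactorial_succ]
      push_cast
      ring

lemma choose_desc (N k i : ℕ) (hk : k ≤ i) (hi : i ≤ N) :
    N.choose i * (N-k).descFactorial (N-i) = (N-k).choose (i-k) * N.descFactorial (N-i) := by
  have h1 : (i-k).factorial * (N-k).descFactorial (N-i) = (N-k).factorial := by
    have := Nat.factorial_mul_descFactorial (show N-i ≤ N-k by omega)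
    rwa [show (N-k)-(N-i) = i-k by omega] at this
  have h2 : i.factorial * N.descFactorial (N-i) = N.factorial := by
    have := Nat.factorial_mul_descFactorial (show N-i ≤ N by omega)
    rwa [show N-(N-i) = i by omega] at this
  have h3 := Nat.choose_mul_factorial_mul_factorial hi
  have h4 := Nat.choose_mul_factorial_mul_factorial (show i-k ≤ N-k by omega)
  rw [show (N-k)-(i-k) = N-i by omega] at h4
  apply Nat.eq_of_mul_eq_mul_right
    (show 0 < i.factorial * (i-k).factorial * (N-i).factorial by positivity)
  zify at h1 h2 h3 h4 ⊢
  linear_combination (↑(N.choose i) * ↑i.factorial * ↑(N-i).factorial : ℤ) * h1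
    + (↑(N-k).factorial : ℤ) * h3
    - (↑((N-k).choose (i-k)) * ↑(i-k).factorial * ↑(N-i).factorial : ℤ) * h2
    - (↑N.factorial : ℤ) * h4
open Finset

theorem alpha_main_factorization_first (n : ℕ) (hn : 2 ≤ n) (N k : ℕ) (hN : 1 ≤ N)
    (hk1 : 1 ≤ k) (hkN : k ≤ N) (i : ℕ) (hi : i ≤ N) :
    (i < k → alphaC n N i ((k : ℂ) - (n : ℂ) / 2) = 0) ∧
    (k ≤ i → alphaC n N i ((k : ℂ) - (n : ℂ) / 2)
        = alphaC n (N - k) (i - k) (-(k : ℂ) - (n : ℂ) / 2)) := by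
  constructor
  · intro hik
    simp only [alphaC]
    rw [Finset.prod_eq_zero (show k ∈ Finset.Icc (i+1) N by simp; omega)
      (show 2 * ((k:ℂ) - n/2) + n - 2*(k:ℂ) = 0 by ring)]
    ring
  · intro hki
    simp only [alphaC]
    rw [show (∏ m ∈ Finset.Icc (i+1) N, (2 * ((k:ℂ) - n/2) + n - 2*(m:ℂ)))
        = ∏ m ∈ Finset.Icc (i+1) N, (2*(k:ℂ) - 2*(m:ℂ)) from
        Finset.prod_congr rfl (fun m _ => by ring),
      prod_desc k i hki N hi,
      show (∏ m ∈ Finset.Icc 1 i, (2 * ((k:ℂ) - n/2) + n - 2*(m:ℂ) - 2*(N:ℂ) + 1))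
        = ∏ m ∈ Finset.Icc 1 i, (-(2*(((N-k:ℕ)):ℂ)) - 2*(m:ℂ) + 1) from
        Finset.prod_congr rfl (fun m _ => by push_cast [Nat.cast_sub hkN]; ring),
      prod_odd (N-k) i,
      show (∏ m ∈ Finset.Icc ((i-k)+1) (N-k), (2 * (-(k:ℂ) - n/2) + n - 2*(m:ℂ)))
        = ∏ m ∈ Finset.Icc ((i-k)+1) (N-k), (-(2*(k:ℂ)) - 2*(m:ℂ)) from
        Finset.prod_congr rfl (fun m _ => by ring),
      prod_desc_neg k (i-k) (N-k) (by omega),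
      show (∏ m ∈ Finset.Icc 1 (i-k), (2 * (-(k:ℂ) - n/2) + n - 2*(m:ℂ) - 2*(((N-k:ℕ)):ℂ) + 1))
        = ∏ m ∈ Finset.Icc 1 (i-k), (-(2*(N:ℂ)) - 2*(m:ℂ) + 1) from
        Finset.prod_congr rfl (fun m _ => by push_cast [Nat.cast_sub hkN]; ring),
      prod_odd N (i-k),
      show (N-k)+k = N by omega, show (N-k)-(i-k) = N-i by omega]
    -- now the algebraic core
    have hB : (oddP (N-k) i : ℂ) = (oddP (N-k) k : ℂ) * (oddP N (i-k) : ℂ) := by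
      have := oddP_add (N-k) k (i-k)
      rw [show k + (i-k) = i by omega, show (N-k)+k = N by omega] at this
      exact_mod_cast this
    have hC : (oddP (N-k) k : ℂ) * 2^k * ((2*(N-k)).factorial : ℂ) * (N.factorial : ℂ)
        = ((2*N).factorial : ℂ) * ((N-k).factorial : ℂ) := by
      have := oddP_key k (N-k)
      rw [show (N-k)+k = N by omega] at this
      exact_mod_cast this
    have hD : (N.choose i : ℂ) * ((N-k).descFactorial (N-i) : ℂ)
        = ((N-k).choose (i-k) : ℂ) * (N.descFactorial (N-i) : ℂ) := by
      exact_mod_cast choose_desc N k i hki hi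
    have s1 : ((-1:ℂ))^i * (-1)^i = 1 := by
      rw [← pow_add]; exact Even.neg_one_pow ⟨i, rfl⟩
    have s2 : ((-1:ℂ))^(i-k) * (-1)^(i-k) = 1 := by
      rw [← pow_add]; exact Even.neg_one_pow ⟨i-k, rfl⟩
    have p1 : (2:ℂ)^(N-k) * 2^k = 2^N := by
      rw [← pow_add]; congr 1; omega
    have f1 : ((2*N).factorial : ℂ) ≠ 0 := Nat.cast_ne_zero.mpr (Nat.factorial_ne_zero _)
    have f2 : ((2*(N-k)).factorial : ℂ) ≠ 0 := Nat.cast_ne_zero.mpr (Nat.factorial_ne_zero _)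
    field_simp
    apply mul_right_cancel₀ (pow_ne_zero k (two_ne_zero (α := ℂ)))
    linear_combination
      ((-1:ℂ)^i * (-1)^i * 2^N * (N.factorial:ℂ) * (N.choose i : ℂ)
        * ((N-k).descFactorial (N-i) : ℂ) * ((2*(N-k)).factorial : ℂ) * 2^k) * hB
      + ((-1:ℂ)^i * (-1)^i * 2^N * (N.choose i : ℂ)
        * ((N-k).descFactorial (N-i) : ℂ) * (oddP N (i-k) : ℂ)) * hC
      + ((2:ℂ)^N * (N.choose i : ℂ) * ((N-k).descFactorial (N-i) : ℂ)
        * (oddP N (i-k) : ℂ) * ((2*N).factorial : ℂ) * ((N-k).factorial : ℂ)) * s1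
      + ((2:ℂ)^N * (oddP N (i-k) : ℂ) * ((2*N).factorial : ℂ)
        * ((N-k).factorial : ℂ)) * hD
      - ((2:ℂ)^(N-k) * 2^k * ((N-k).factorial : ℂ) * ((N-k).choose (i-k) : ℂ)
        * (N.descFactorial (N-i) : ℂ) * (oddP N (i-k) : ℂ) * ((2*N).factorial : ℂ)) * s2
      - (((N-k).factorial : ℂ) * ((N-k).choose (i-k) : ℂ)
        * (N.descFactorial (N-i) : ℂ) * (oddP N (i-k) : ℂ) * ((2*N).factorial : ℂ)) * p1
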